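/- Let T be a tree on n vertices with s×s real matrix edge weights W_1,…,W_{n−1} such that the distance matrix D of T is invertible, and let L be the Laplacian matrix of T formed from the inverses of the weights. For i = 1,…,n let δ_i = 2 − d_i, where d_i is the degree of vertex i, and let δ = (δ_1,…,δ_n)^T and let 1 denote the all-ones column vector of length n. Then D·L = (1·δ^T) ⊗ I_s − 2 I_n ⊗ I_s. -/

import Mathlib

open Matrix
open scoped Kronecker

/-- Matrix-weighted Laplacian: each edge weight is replaced by its inverse. -/
noncomputable def matLap {n s : ℕ} (G : SimpleGraph (Fin n)) [DecidableRel G.Adj]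
    (w : Sym2 (Fin n) → Matrix (Fin s) (Fin s) ℝ) :
    Matrix (Fin n × Fin s) (Fin n × Fin s) ℝ :=
  Matrix.of fun p q =>
    if p.1 = q.1 then (∑ k ∈ G.neighborFinset p.1, (w (s(p.1, k)))⁻¹) p.2 q.2
    else if G.Adj p.1 q.1 then (-(w (s(p.1, q.1)))⁻¹) p.2 q.2
    else 0

/-- Let `T` be a tree on `n` vertices with `s × s` real matrix edge weights such
that the distance matrix `D` of `T` is invertible, and let `L` be the Laplacian formed from the
inverses of the weights.  With `δᵢ = 2 - dᵢ` and `𝟙` the all-ones vector,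
`D · L = (𝟙 δᵀ) ⊗ I_s - 2 Iₙ ⊗ I_s`. -/
theorem distanceMatrix_mul_lap {n s : ℕ}
    (G : SimpleGraph (Fin n)) [DecidableRel G.Adj] (hT : G.IsTree)
    (w : Sym2 (Fin n) → Matrix (Fin s) (Fin s) ℝ)
    (D : Matrix (Fin n × Fin s) (Fin n × Fin s) ℝ)
    (hD : ∀ (i j : Fin n) (p : G.Walk i j), p.IsPath →
      ∀ a b, D (i, a) (j, b) = ((p.edges.map w).sum) a b)
    (hDinv : IsUnit D)
    (δ : Fin n → ℝ) (hδ : ∀ i, δ i = 2 - (G.degree i : ℝ)) :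
    D * matLap G w = vecMulVec (fun _ => (1 : ℝ)) δ ⊗ₖ (1 : Matrix (Fin s) (Fin s) ℝ)
      - (2 : ℝ) • ((1 : Matrix (Fin n) (Fin n) ℝ) ⊗ₖ (1 : Matrix (Fin s) (Fin s) ℝ)) := by
  classical
  choose P hP hPu using hT.existsUnique_path
  set dW : Fin n → Fin n → Matrix (Fin s) (Fin s) ℝ :=
    fun u v => ((P u v).edges.map w).sum with hdW
  have hpathsum : ∀ (u v : Fin n) (q : G.Walk u v), q.IsPath → (q.edges.map w).sum = dW u v := by
    intro u v q hq
    rw [hPu u v q hq]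
  have hsym : ∀ u v, dW u v = dW v u := by
    intro u v
    rw [← hpathsum v u (P u v).reverse ((hP u v).reverse), SimpleGraph.Walk.edges_reverse,
      List.map_reverse, List.sum_reverse]
  have hDblk : ∀ (u v : Fin n) a b, D (u, a) (v, b) = dW u v a b :=
    fun u v a b => hD u v (P u v) (hP u v) a b
  have E0 : ∀ u, dW u u = 0 := by
    intro u
    rw [← hpathsum u u SimpleGraph.Walk.nil SimpleGraph.Walk.IsPath.nil]
    simp
  have E1 : ∀ u v (h : G.Adj u v), dW u v = w (s(u, v)) := by
    intro u v h
    rw [← hpathsum u v (SimpleGraph.Walk.cons h SimpleGraph.Walk.nil)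
      (by simp [SimpleGraph.Walk.cons_isPath_iff, h.ne])]
    simp
  -- invertibility of edge weights
  have hWinv : ∀ u v, G.Adj u v → IsUnit (w (s(u, v))) := by
    intro u v h
    by_contra hW
    have E2 : ∀ k, dW k u = dW k v + w (s(u, v)) ∨
        dW k v = dW k u + w (s(u, v)) := by
      intro k
      by_cases hv : v ∈ (P u k).support
      · left
        have hsum := congrArg (fun z : G.Walk u k => ((z.edges.map w).sum))
          (SimpleGraph.Walk.take_spec (P u k) hv)
        simp only [SimpleGraph.Walk.edges_append, List.map_append, List.sum_append] at hsum
        rw [hpathsum u k (P u k) (hP u k), hpathsum u v _ ((hP u k).takeUntil hv),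
          hpathsum v k _ ((hP u k).dropUntil hv), E1 u v h] at hsum
        rw [hsym k u, hsym k v, ← hsum, add_comm]
      · right
        have hr : (SimpleGraph.Walk.cons h.symm (P u k)).IsPath := by
          rw [SimpleGraph.Walk.cons_isPath_iff]
          exact ⟨hP u k, hv⟩
        have := hpathsum v k _ hr
        rw [SimpleGraph.Walk.edges_cons, List.map_cons, List.sum_cons] at this
        rw [hpathsum u k (P u k) (hP u k)] at this  -- no-op but ok
        rw [hsym k v, hsym k u, ← this, hdW]
        rw [Sym2.eq_swap, add_comm]
    have hdet : (w (s(u, v))).det = 0 := by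
      by_contra hd
      exact hW ((Matrix.isUnit_iff_isUnit_det _).mpr (isUnit_iff_ne_zero.mpr hd))
    obtain ⟨cvec, hc0, hcz⟩ := (Matrix.exists_mulVec_eq_zero_iff).mpr hdet
    set y : Fin n × Fin s → ℝ :=
      fun p => (if p.1 = u then cvec p.2 else 0) - (if p.1 = v then cvec p.2 else 0) with hy
    have hDy : D *ᵥ y = 0 := by
      funext x
      obtain ⟨k, a⟩ := x
      rw [Pi.zero_apply]
      show ∑ x : Fin n × Fin s, D (k, a) x * y x = 0
      rw [Fintype.sum_prod_type]
      have hm : ∀ m : Fin n, ∑ b, D (k, a) (m, b) * y (m, b) =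
          (if m = u then (dW k u *ᵥ cvec) a else 0) -
          (if m = v then (dW k v *ᵥ cvec) a else 0) := by
        intro m
        by_cases h1 : m = u <;> by_cases h2 : m = v
        · exact absurd (h1 ▸ h2) h.ne
        · subst h1
          have hyb : ∀ b, y (m, b) = cvec b := by intro b; simp [hy, h2]
          rw [if_pos rfl, if_neg h2, sub_zero]
          show _ = ∑ b, dW k m a b * cvec b
          refine Finset.sum_congr rfl fun b _ => ?_
          rw [hDblk, hyb b]
        · subst h2
          have hyb : ∀ b, y (m, b) = -cvec b := by intro b; simp [hy, h1]
          rw [if_neg h1, if_pos rfl, zero_sub]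
          show _ = -∑ b, dW k m a b * cvec b
          rw [← Finset.sum_neg_distrib]
          refine Finset.sum_congr rfl fun b _ => ?_
          rw [hDblk, hyb b, mul_neg]
        · have hyb : ∀ b, y (m, b) = 0 := by intro b; simp [hy, h1, h2]
          rw [if_neg h1, if_neg h2, sub_zero]
          simp only [hyb, mul_zero, Finset.sum_const_zero]
      rw [Finset.sum_congr rfl fun m _ => hm m, Finset.sum_sub_distrib,
        Finset.sum_ite_eq' Finset.univ u, Finset.sum_ite_eq' Finset.univ v]
      simp only [Finset.mem_univ, if_pos]
      rcases E2 k with hE | hE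
      · rw [hE, Matrix.add_mulVec, hcz]
        simp
      · rw [hE, Matrix.add_mulVec, hcz]
        simp
    obtain ⟨U, hU⟩ := hDinv
    have hyz : y = 0 := by
      have h1 : (↑U⁻¹ : Matrix (Fin n × Fin s) (Fin n × Fin s) ℝ) * D = 1 := by
        rw [← hU]; exact U.inv_mul
      calc y = (1 : Matrix (Fin n × Fin s) (Fin n × Fin s) ℝ) *ᵥ y := (Matrix.one_mulVec y).symm
        _ = ((↑U⁻¹ : Matrix (Fin n × Fin s) (Fin n × Fin s) ℝ) * D) *ᵥ y := by rw [h1]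
        _ = (↑U⁻¹ : Matrix (Fin n × Fin s) (Fin n × Fin s) ℝ) *ᵥ (D *ᵥ y) :=
            (Matrix.mulVec_mulVec _ _ _).symm
        _ = 0 := by rw [hDy, Matrix.mulVec_zero]
    obtain ⟨b0, hb0⟩ := Function.ne_iff.mp hc0
    apply hb0
    have := congrFun hyz (u, b0)
    simpa [hy, h.ne] using this
  -- the key block identity
  have key : ∀ i j : Fin n,
      (∑ k : Fin n, dW i k *
        (if k = j then (∑ m ∈ G.neighborFinset k, (w (s(k, m)))⁻¹)
          else if G.Adj k j then -(w (s(k, j)))⁻¹ else 0)) =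
      δ j • (1 : Matrix (Fin s) (Fin s) ℝ) -
        (if i = j then (2 : ℝ) • (1 : Matrix (Fin s) (Fin s) ℝ) else 0) := by
    intro i j
    have hWW : ∀ k, G.Adj j k → w (s(j, k)) * (w (s(j, k)))⁻¹ = 1 := by
      intro k hk
      exact Matrix.mul_nonsing_inv _ ((Matrix.isUnit_iff_isUnit_det _).mp (hWinv j k hk))
    have split : ∀ k : Fin n, dW i k *
        (if k = j then (∑ m ∈ G.neighborFinset k, (w (s(k, m)))⁻¹)
          else if G.Adj k j then -(w (s(k, j)))⁻¹ else 0) =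
        (if k = j then dW i j * (∑ m ∈ G.neighborFinset j, (w (s(j, m)))⁻¹) else 0) +
        (if G.Adj j k then -(dW i k * (w (s(j, k)))⁻¹) else 0) := by
      intro k
      by_cases hkj : k = j
      · subst hkj
        rw [if_pos rfl, if_pos rfl, if_neg (G.irrefl), add_zero]
      · rw [if_neg hkj, if_neg hkj, zero_add]
        by_cases hadj : G.Adj k j
        · rw [if_pos hadj, if_pos hadj.symm, mul_neg, Sym2.eq_swap]
        · rw [if_neg hadj, if_neg (fun hh => hadj hh.symm), mul_zero]
    rw [Finset.sum_congr rfl fun k _ => split k, Finset.sum_add_distrib,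
      Finset.sum_ite_eq' Finset.univ j]
    simp only [Finset.mem_univ, if_pos]
    have hfilter : Finset.univ.filter (fun k => G.Adj j k) = G.neighborFinset j := by
      ext k
      simp [SimpleGraph.mem_neighborFinset]
    rw [← Finset.sum_filter, hfilter, Finset.mul_sum, ← Finset.sum_add_distrib]
    have hterm : ∀ k ∈ G.neighborFinset j,
        dW i j * (w (s(j, k)))⁻¹ + -(dW i k * (w (s(j, k)))⁻¹) =
        (dW i j - dW i k) * (w (s(j, k)))⁻¹ := by
      intro k _
      rw [sub_mul]
      abel
    rw [Finset.sum_congr rfl hterm]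
    by_cases hij : i = j
    · subst hij
      rw [if_pos rfl]
      have : ∀ k ∈ G.neighborFinset i,
          (dW i i - dW i k) * (w (s(i, k)))⁻¹ = -(1 : Matrix (Fin s) (Fin s) ℝ) := by
        intro k hk
        rw [SimpleGraph.mem_neighborFinset] at hk
        rw [E0, E1 i k hk, zero_sub, neg_mul, hWW k hk]
      rw [Finset.sum_congr rfl this, Finset.sum_const]
      rw [hδ]
      have hdeg : (G.neighborFinset i).card = G.degree i := rfl
      rw [hdeg, sub_smul, smul_neg, ← Nat.cast_smul_eq_nsmul ℝ]
      abel
    · rw [if_neg hij, sub_zero]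
      have hji : j ≠ i := fun hh => hij hh.symm
      obtain ⟨c, hjc, q, hq⟩ := SimpleGraph.Walk.exists_eq_cons_of_ne hji (P j i)
      have hqprop : q.IsPath ∧ j ∉ q.support := by
        have := hP j i
        rw [hq, SimpleGraph.Walk.cons_isPath_iff] at this
        exact this
      have ha : dW i j = w (s(j, c)) + dW i c := by
        rw [hsym i j, ← hpathsum j i (P j i) (hP j i), hq, SimpleGraph.Walk.edges_cons,
          List.map_cons, List.sum_cons, hpathsum c i q hqprop.1, hsym c i]
      have hb : ∀ k, G.Adj j k → k ≠ c → dW i k = w (s(j, k)) + dW i j := by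
        intro k hjk hkc
        have hknq : k ∉ q.support := by
          intro hk
          have ht : (q.takeUntil k hk).IsPath := hqprop.1.takeUntil hk
          have h1 : SimpleGraph.Walk.cons hjc (q.takeUntil k hk) = P j k := by
            apply hPu
            rw [SimpleGraph.Walk.cons_isPath_iff]
            exact ⟨ht, fun hcon => hqprop.2 (SimpleGraph.Walk.support_takeUntil_subset q hk hcon)⟩
          have h2 : SimpleGraph.Walk.cons hjk SimpleGraph.Walk.nil = P j k := by
            apply hPu
            rw [SimpleGraph.Walk.cons_isPath_iff]
            exact ⟨SimpleGraph.Walk.IsPath.nil, by simp [hjk.ne]⟩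
          have h3 := congrArg SimpleGraph.Walk.length (h1.trans h2.symm)
          simp only [SimpleGraph.Walk.length_cons, SimpleGraph.Walk.length_nil,
            Nat.add_right_cancel_iff] at h3
          exact hkc (SimpleGraph.Walk.eq_of_length_eq_zero (p := q.takeUntil k hk) h3).symm
        have hkP : k ∉ (P j i).support := by
          rw [hq, SimpleGraph.Walk.support_cons]
          intro hcon
          rcases List.mem_cons.mp hcon with hcon | hcon
          · exact hjk.ne' hcon
          · exact hknq hcon
        have hr : (SimpleGraph.Walk.cons hjk.symm (P j i)).IsPath := by
          rw [SimpleGraph.Walk.cons_isPath_iff]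
          exact ⟨hP j i, hkP⟩
        have := hpathsum k i _ hr
        rw [SimpleGraph.Walk.edges_cons, List.map_cons, List.sum_cons] at this
        rw [hsym i k, ← this, hsym i j, hdW, Sym2.eq_swap]
      have hone : ∀ k ∈ G.neighborFinset j,
          (dW i j - dW i k) * (w (s(j, k)))⁻¹ =
          (if k = c then (2 : ℝ) • (1 : Matrix (Fin s) (Fin s) ℝ) else 0) +
            -(1 : Matrix (Fin s) (Fin s) ℝ) := by
        intro k hk
        rw [SimpleGraph.mem_neighborFinset] at hk
        by_cases hkc : k = c
        · subst hkc
          rw [if_pos rfl, ha]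
          rw [add_sub_cancel_right, hWW k hk]
          rw [two_smul]
          abel
        · rw [if_neg hkc, hb k hk hkc, zero_add]
          have : dW i j - (w (s(j, k)) + dW i j) = -(w (s(j, k))) := by abel
          rw [this, neg_mul, hWW k hk]
      rw [Finset.sum_congr rfl hone, Finset.sum_add_distrib, Finset.sum_ite_eq' _ c,
        if_pos (by rw [SimpleGraph.mem_neighborFinset]; exact hjc), Finset.sum_const]
      rw [hδ]
      have hdeg : (G.neighborFinset j).card = G.degree j := rfl
      rw [hdeg, sub_smul, smul_neg, ← Nat.cast_smul_eq_nsmul ℝ]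
      abel
  -- assemble
  ext ⟨i, a⟩ ⟨j, b⟩
  rw [Matrix.mul_apply, Fintype.sum_prod_type]
  have hterm : ∀ k : Fin n, (∑ cc, D (i, a) (k, cc) * matLap G w (k, cc) (j, b)) =
      (dW i k *
        (if k = j then (∑ m ∈ G.neighborFinset k, (w (s(k, m)))⁻¹)
          else if G.Adj k j then -(w (s(k, j)))⁻¹ else 0)) a b := by
    intro k
    rw [Matrix.mul_apply]
    refine Finset.sum_congr rfl fun cc _ => ?_
    rw [hDblk]
    congr 1
    show matLap G w (k, cc) (j, b) = _
    simp only [matLap, Matrix.of_apply]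
    by_cases h1 : k = j
    · subst h1
      rw [if_pos rfl, if_pos rfl]
    · rw [if_neg h1, if_neg h1]
      by_cases h2 : G.Adj k j
      · rw [if_pos h2, if_pos h2]
      · rw [if_neg h2, if_neg h2, Matrix.zero_apply]
  rw [Finset.sum_congr rfl fun k _ => hterm k, ← Matrix.sum_apply, key i j]
  simp only [Matrix.sub_apply, Matrix.smul_apply, Matrix.kroneckerMap_apply,
    Matrix.vecMulVec_apply, Matrix.one_apply, smul_eq_mul]
  by_cases hij : i = j <;> by_cases hab : a = b <;>
    simp [hij, hab, Matrix.one_apply]
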